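/- Let 𝒴 contain all singletons {x} for x ∈ Z, be closed under finite unions and arbitrary intersections, and let μ : 𝒴 → 𝒴 satisfy (μ=) for finite sets, (μ∈), (μPR3) and (μ∅fin). Then: (1) μ₃(X) ⊆ μ(X) for all X ∈ 𝒴; (2) μ(X) = μ₃(X) for all finite X ∈ 𝒴; (3) μ₃ satisfies (μ⊆): μ₃(X) ⊆ X; (4) μ₃ satisfies (μPR): X ⊆ Y implies μ₃(Y) ∩ X ⊆ μ₃(X); (5) μ₃ satisfies (μ∅fin); (6) μ₃ satisfies (μ=) (for all X, Y ∈ 𝒴); (7) μ₃ satisfies (μ∈); (8) μ(X) = ⌢(μ₃(X)) for all X ∈ 𝒴. -/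

import Mathlib

universe u

/-- The hull `⌢A` of `A` with respect to 𝒴. -/
def hull {Z : Type u} (𝒴 : Set (Set Z)) (A : Set Z) : Set Z :=
  ⋂₀ {X | X ∈ 𝒴 ∧ A ⊆ X}

/-- `μ₃(U) := {x ∈ U : for all y ∈ U, x ∈ μ({x, y})}`. -/
def mu3 {Z : Type u} (μ : Set Z → Set Z) (U : Set Z) : Set Z :=
  {x ∈ U | ∀ y ∈ U, x ∈ μ {x, y}}

/-- Properties of μ₃ derived from (μ=) for finite sets, (μ∈), (μPR3), (μ∅fin). -/
theorem mu3_properties {Z : Type u} (𝒴 : Set (Set Z)) (μ : Set Z → Set Z)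
    (hmem : ∀ X ∈ 𝒴, μ X ∈ 𝒴)
    (hsing : ∀ x : Z, {x} ∈ 𝒴)
    (hUnion : ∀ A ∈ 𝒴, ∀ B ∈ 𝒴, A ∪ B ∈ 𝒴)
    (hInter : ∀ S : Set (Set Z), S ⊆ 𝒴 → S.Nonempty → ⋂₀ S ∈ 𝒴)
    -- (μ=) for finite sets:
    (heqfin : ∀ X ∈ 𝒴, ∀ Y ∈ 𝒴, X.Finite → Y.Finite → X ⊆ Y →
      (μ Y ∩ X).Nonempty → μ Y ∩ X = μ X)
    -- (μ∈):
    (hin : ∀ X ∈ 𝒴, ∀ a ∈ X, a ∉ μ X → ∃ b ∈ X, a ∉ μ {a, b})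
    -- (μPR3):
    (hPR3 : ∀ U ∈ 𝒴, ¬ ∃ X ∈ 𝒴, mu3 μ U ⊆ X ∧ X ⊂ μ U)
    -- (μ∅fin):
    (hnefin : ∀ X ∈ 𝒴, X.Finite → X.Nonempty → (μ X).Nonempty) :
    -- (1)
    (∀ X ∈ 𝒴, mu3 μ X ⊆ μ X) ∧
    -- (2)
    (∀ X ∈ 𝒴, X.Finite → μ X = mu3 μ X) ∧
    -- (3) (μ⊆) for μ₃
    (∀ X ∈ 𝒴, mu3 μ X ⊆ X) ∧
    -- (4) (μPR) for μ₃
    (∀ X ∈ 𝒴, ∀ Y ∈ 𝒴, X ⊆ Y → mu3 μ Y ∩ X ⊆ mu3 μ X) ∧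
    -- (5) (μ∅fin) for μ₃
    (∀ X ∈ 𝒴, X.Finite → X.Nonempty → (mu3 μ X).Nonempty) ∧
    -- (6) (μ=) for μ₃, for all X, Y ∈ 𝒴
    (∀ X ∈ 𝒴, ∀ Y ∈ 𝒴, X ⊆ Y → (mu3 μ Y ∩ X).Nonempty → mu3 μ Y ∩ X = mu3 μ X) ∧
    -- (7) (μ∈) for μ₃
    (∀ X ∈ 𝒴, ∀ a ∈ X, a ∉ mu3 μ X → ∃ b ∈ X, a ∉ mu3 μ {a, b}) ∧
    -- (8)
    (∀ X ∈ 𝒴, μ X = hull 𝒴 (mu3 μ X)) := by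
  -- pairs are in 𝒴
  have hpair : ∀ a b : Z, ({a, b} : Set Z) ∈ 𝒴 := by
    intro a b
    have := hUnion {a} (hsing a) {b} (hsing b)
    rwa [Set.singleton_union] at this
  -- finite nonempty sets are in 𝒴
  have hfin𝒴 : ∀ S : Set Z, S.Finite → S.Nonempty → S ∈ 𝒴 := by
    intro S hS
    refine Set.Finite.induction_on (motive := fun S _ => S.Nonempty → S ∈ 𝒴) S hS (fun h => absurd h (by simp)) ?_
    intro a s _ _ ih _
    rcases s.eq_empty_or_nonempty with rfl | hne
    · simpa using hsing a
    · have := hUnion {a} (hsing a) s (ih hne)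
      rwa [Set.singleton_union] at this
  -- (1)
  have h1 : ∀ X ∈ 𝒴, mu3 μ X ⊆ μ X := by
    intro X hX x hx
    by_contra hxm
    obtain ⟨b, hb, hnb⟩ := hin X hX x hx.1 hxm
    exact hnb (hx.2 b hb)
  -- (3)
  have h3 : ∀ X ∈ 𝒴, mu3 μ X ⊆ X := fun X _ x hx => hx.1
  -- μ∅ = ∅ when ∅ ∈ 𝒴
  have hemp : ∅ ∈ 𝒴 → μ ∅ = ∅ := by
    intro h0
    by_contra hne
    refine hPR3 ∅ h0 ⟨∅, h0, ?_, ?_⟩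
    · intro x hx; exact hx.1
    · exact Set.empty_ssubset.2 (Set.nonempty_iff_ne_empty.2 hne)
  -- if ∅ ∉ 𝒴 then Z is a subsingleton
  have hZsub : ∅ ∉ 𝒴 → ∀ x y : Z, x = y := by
    intro h0 x y
    by_contra hxy
    apply h0
    have hmem2 : ⋂₀ {({x} : Set Z), {y}} ∈ 𝒴 := by
      refine hInter _ ?_ ⟨{x}, by simp⟩
      rintro A (rfl | rfl)
      · exact hsing x
      · exact hsing y
    have : ⋂₀ {({x} : Set Z), {y}} = (∅ : Set Z) := by
      rw [Set.sInter_pair]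
      ext z
      simp only [Set.mem_inter_iff, Set.mem_singleton_iff, Set.mem_empty_iff_false, iff_false]
      rintro ⟨rfl, rfl⟩
      exact hxy rfl
    rwa [this] at hmem2
  -- (5)
  have h5 : ∀ X ∈ 𝒴, X.Finite → X.Nonempty → (mu3 μ X).Nonempty := by
    intro X hX hfin hne
    by_cases h0 : ∅ ∈ 𝒴
    · by_contra hm
      have hm' : mu3 μ X = ∅ := Set.not_nonempty_iff_eq_empty.1 hm
      refine hPR3 X hX ⟨∅, h0, by simp [hm'], Set.empty_ssubset.2 (hnefin X hX hfin hne)⟩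
    · obtain ⟨z, hz⟩ := hne
      refine ⟨z, hz, fun y hy => ?_⟩
      obtain ⟨w, hw⟩ := hnefin {z, y} (hpair z y)
        ((Set.finite_singleton y).insert z) ⟨z, by simp⟩
      have : w = z := hZsub h0 w z
      rwa [this] at hw
  -- (2)
  have h2 : ∀ X ∈ 𝒴, X.Finite → μ X = mu3 μ X := by
    intro X hX hfin
    rcases X.eq_empty_or_nonempty with rfl | hne
    · rw [hemp hX]
      ext x; simp [mu3]
    · have hm := h5 X hX hfin hne
      have hmY : mu3 μ X ∈ 𝒴 := hfin𝒴 _ (hfin.subset (h3 X hX)) hm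
      have hsub := h1 X hX
      by_contra hne2
      exact hPR3 X hX ⟨mu3 μ X, hmY, subset_rfl,
        ⟨hsub, fun h => hne2 (subset_antisymm h hsub)⟩⟩
  -- key transitivity
  have htrans : ∀ a c y : Z, a ∈ μ {a, c} → c ∈ μ {c, y} → a ∈ μ {a, y} := by
    intro a c y hac hcy
    set T : Set Z := {a, c, y} with hTdef
    have hTfin : T.Finite := ((Set.finite_singleton y).insert c).insert a
    have hT : T ∈ 𝒴 := hfin𝒴 T hTfin ⟨a, by simp [hTdef]⟩
    have hμT : μ T = mu3 μ T := h2 T hT hTfin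
    have hμTsub : μ T ⊆ T := by rw [hμT]; exact h3 T hT
    have hacT : ({a, c} : Set Z) ⊆ T := by intro x hx; rcases hx with rfl | rfl <;> simp [hTdef]
    have hayT : ({a, y} : Set Z) ⊆ T := by
      intro x hx; rcases hx with rfl | rfl
      · simp [hTdef]
      · simp [hTdef]
    have hcyT : ({c, y} : Set Z) ⊆ T := by
      intro x hx; rcases hx with rfl | rfl <;> simp [hTdef]
    have hpfin : ∀ u v : Z, ({u, v} : Set Z).Finite := fun u v =>
      (Set.finite_singleton v).insert u
    have haT : a ∈ μ T := by
      by_contra haT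
      -- μ T ∩ {a, c} = ∅, hence a, c ∉ μ T
      have hcT : c ∉ μ T := by
        intro hcT
        have := heqfin {a, c} (hpair a c) T hT (hpfin a c) hTfin hacT ⟨c, hcT, by simp⟩
        exact haT (this ▸ hac).1
      -- μ T nonempty, so y ∈ μ T
      obtain ⟨w, hw⟩ := hnefin T hT hTfin ⟨a, by simp [hTdef]⟩
      have hwy : w = y := by
        rcases hμTsub hw with h | h | h
        · exact absurd (h ▸ hw) haT
        · exact absurd (h ▸ hw) hcT
        · exact h
      have hyT : y ∈ μ T := hwy ▸ hw
      have := heqfin {c, y} (hpair c y) T hT (hpfin c y) hTfin hcyT ⟨y, hyT, by simp⟩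
      exact hcT (this ▸ hcy).1
    have := heqfin {a, y} (hpair a y) T hT (hpfin a y) hTfin hayT ⟨a, haT, by simp⟩
    exact (this ▸ (⟨haT, by simp⟩ : a ∈ μ T ∩ {a, y}) : a ∈ μ {a, y})
  -- (4)
  have h4 : ∀ X ∈ 𝒴, ∀ Y ∈ 𝒴, X ⊆ Y → mu3 μ Y ∩ X ⊆ mu3 μ X :=
    fun X _ Y _ hXY x hx => ⟨hx.2, fun y hy => hx.1.2 y (hXY hy)⟩
  -- (6)
  have h6 : ∀ X ∈ 𝒴, ∀ Y ∈ 𝒴, X ⊆ Y → (mu3 μ Y ∩ X).Nonempty →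
      mu3 μ Y ∩ X = mu3 μ X := by
    intro X hX Y hY hXY hne
    obtain ⟨c, hcY, hcX⟩ := hne
    refine subset_antisymm (h4 X hX Y hY hXY) ?_
    intro a ha
    refine ⟨⟨hXY ha.1, fun y hy => ?_⟩, ha.1⟩
    exact htrans a c y (ha.2 c hcX) (hcY.2 y hy)
  -- (7)
  have h7 : ∀ X ∈ 𝒴, ∀ a ∈ X, a ∉ mu3 μ X → ∃ b ∈ X, a ∉ mu3 μ {a, b} := by
    intro X hX a haX ham
    have : ∃ y ∈ X, a ∉ μ {a, y} := by
      by_contra h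
      push_neg at h
      exact ham ⟨haX, h⟩
    obtain ⟨b, hb, hab⟩ := this
    exact ⟨b, hb, fun h => hab (h.2 b (by simp))⟩
  -- (8)
  have h8 : ∀ X ∈ 𝒴, μ X = hull 𝒴 (mu3 μ X) := by
    intro X hX
    have hμ : μ X ∈ 𝒴 := hmem X hX
    have hsub := h1 X hX
    have hS : {W | W ∈ 𝒴 ∧ mu3 μ X ⊆ W} ⊆ 𝒴 := fun W hW => hW.1
    have hSne : ({W | W ∈ 𝒴 ∧ mu3 μ X ⊆ W}).Nonempty := ⟨μ X, hμ, hsub⟩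
    have hhull𝒴 : hull 𝒴 (mu3 μ X) ∈ 𝒴 := hInter _ hS hSne
    have hle : hull 𝒴 (mu3 μ X) ⊆ μ X := Set.sInter_subset_of_mem ⟨hμ, hsub⟩
    have hge0 : mu3 μ X ⊆ hull 𝒴 (mu3 μ X) := Set.subset_sInter fun W hW => hW.2
    by_contra hne
    exact hPR3 X hX ⟨_, hhull𝒴, hge0,
      ⟨hle, fun h => hne (subset_antisymm h hle)⟩⟩
  exact ⟨h1, h2, h3, h4, h5, h6, h7, h8⟩
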